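/- Garsia–Rodemich–Rumsey inequality: for every p > 0 and θ > 1/p there exists a constant C_{p,θ} > 0 such that for every T > 0 and every continuous function f : [0,T] → ℝ, sup_{0 ≤ s < t ≤ T} |f(t) − f(s)| / (t−s)^{θ − 1/p} ≤ C_{p,θ} ( ∫₀ᵀ ∫₀ᵀ |f(x) − f(y)|^p / |x − y|^{θp + 1} dx dy )^{1/p}. -/

import Mathlib

open Real MeasureTheory Set Filter
open scoped ENNReal NNReal Topology

lemma grr_exists_good (S : Set ℝ) (hv0 : volume S ≠ 0)
    (hvt : volume S ≠ ⊤) (h1 h2 : ℝ → ℝ≥0∞) (hm1 : Measurable h1) (hm2 : Measurable h2)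
    (B1 B2 : ℝ≥0∞) (hB1 : (∫⁻ x in S, h1 x) ≤ B1) (hB2 : (∫⁻ x in S, h2 x) ≤ B2)
    (hB10 : B1 ≠ 0) (hB1t : B1 ≠ ⊤) (hB20 : B2 ≠ 0) (hB2t : B2 ≠ ⊤) :
    ∃ x ∈ S, h1 x * volume S ≤ 3 * B1 ∧ h2 x * volume S ≤ 3 * B2 := by
  set μ := volume.restrict S with hμ
  set v := volume S with hv
  have hμuniv : μ univ = v := by rw [hμ, Measure.restrict_apply MeasurableSet.univ, univ_inter]
  have key : ∀ (h : ℝ → ℝ≥0∞), Measurable h → ∀ B : ℝ≥0∞, (∫⁻ x in S, h x) ≤ B → B ≠ 0 → B ≠ ⊤ →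
      μ {x | 3 * B / v ≤ h x} ≤ v / 3 := by
    intro h hm B hB hB0 hBt
    have hε0 : 3 * B / v ≠ 0 := by
      rw [ne_eq, ENNReal.div_eq_zero_iff]
      push_neg
      exact ⟨mul_ne_zero (by norm_num) hB0, hvt⟩
    have hεt : 3 * B / v ≠ ⊤ := (ENNReal.div_lt_top (by finiteness) hv0).ne
    have h1 := meas_ge_le_lintegral_div (μ := μ) hm.aemeasurable hε0 hεt
    have h2 : (∫⁻ x, h x ∂μ) / (3 * B / v) ≤ B / (3 * B / v) := by gcongr
    have h3 : B / (3 * B / v) ≤ v / 3 := by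
      rw [ENNReal.div_le_iff hε0 hεt]
      refine le_of_eq ?_
      simp only [div_eq_mul_inv]
      calc B = (v * v⁻¹) * ((3:ℝ≥0∞) * 3⁻¹) * B := by
              rw [ENNReal.mul_inv_cancel hv0 hvt, ENNReal.mul_inv_cancel (by norm_num) (by norm_num)]
              ring
        _ = v * 3⁻¹ * (3 * B * v⁻¹) := by ring
    exact h1.trans (h2.trans h3)
  have k1 := key h1 hm1 B1 hB1 hB10 hB1t
  have k2 := key h2 hm2 B2 hB2 hB20 hB2t
  set bad := {x | 3 * B1 / v ≤ h1 x} ∪ {x | 3 * B2 / v ≤ h2 x} with hbad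
  have hbadm : MeasurableSet bad :=
    ((measurableSet_le measurable_const hm1)).union (measurableSet_le measurable_const hm2)
  have hbadv : μ bad ≤ v / 3 + v / 3 := le_trans (measure_union_le _ _) (add_le_add k1 k2)
  have hgood : μ badᶜ ≠ 0 := by
    intro h0
    have : v ≤ v / 3 + v / 3 := by
      calc v = μ univ := hμuniv.symm
        _ ≤ μ bad + μ badᶜ := measure_univ_le_add_compl bad
        _ = μ bad := by rw [h0, add_zero]
        _ ≤ v / 3 + v / 3 := hbadv
    have hvr : 0 < v.toReal := ENNReal.toReal_pos hv0 hvt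
    have hd : v / 3 ≠ ⊤ := (ENNReal.div_lt_top hvt (by norm_num)).ne
    have := ENNReal.toReal_mono (ENNReal.add_ne_top.mpr ⟨hd, hd⟩) this
    rw [ENNReal.toReal_add hd hd, ENNReal.toReal_div] at this
    simp at this
    linarith
  rw [hμ, Measure.restrict_apply hbadm.compl] at hgood
  obtain ⟨x, hx1, hx2⟩ := nonempty_of_measure_ne_zero hgood
  rw [hbad, compl_union, mem_inter_iff, mem_compl_iff, mem_compl_iff, mem_setOf_eq, mem_setOf_eq] at hx1
  push_neg at hx1
  refine ⟨x, hx2, ?_, ?_⟩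
  · rw [← ENNReal.le_div_iff_mul_le (.inl hv0) (.inl hvt)]
    exact hx1.1.le
  · rw [← ENNReal.le_div_iff_mul_le (.inl hv0) (.inl hvt)]
    exact hx1.2.le

lemma grr_chain (p θ : ℝ) (hp : 0 < p) (hθ : 1/p < θ)
    (g : ℝ → ℝ) (hg : Continuous g)
    (ℓ₀ : ℝ) (hℓ₀ : 0 < ℓ₀) (c : ℕ → ℝ)
    (hsub : ∀ n, Icc (c (n+1)) (c (n+1) + ℓ₀/2^(n+1)) ⊆ Icc (c n) (c n + ℓ₀/2^n))
    (τ : ℝ) (hτ : ∀ n, τ ∈ Icc (c n) (c n + ℓ₀/2^n))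
    (M : ℝ≥0∞) (hM0 : M ≠ 0) (hMt : M ≠ ⊤)
    (hbound : ∀ n, (∫⁻ x in Icc (c n) (c n + ℓ₀/2^n), ∫⁻ y in Icc (c n) (c n + ℓ₀/2^n),
        ENNReal.ofReal (|g x - g y| ^ p)) ≤ ENNReal.ofReal ((ℓ₀/2^n) ^ (θ*p+1)) * M)
    (x₀ : ℝ) (hx₀ : x₀ ∈ Icc (c 0) (c 0 + ℓ₀/2^0))
    (hx₀good : (∫⁻ y in Icc (c 1) (c 1 + ℓ₀/2^1), ENNReal.ofReal (|g x₀ - g y| ^ p))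
          * volume (Icc (c 0) (c 0 + ℓ₀/2^0))
        ≤ 3 * (ENNReal.ofReal ((ℓ₀/2^0) ^ (θ*p+1)) * M)) :
    |g x₀ - g τ| ≤ (18 * M.toReal)^(1/p) * ℓ₀^(θ-1/p) / (1 - (1/2:ℝ)^(θ-1/p)) := by
  have hp' : (0:ℝ) < 1/p := by positivity
  set κ := θ - 1/p with hκdef
  have hκ : 0 < κ := sub_pos.mpr hθ
  set ℓ : ℕ → ℝ := fun n => ℓ₀/2^n with hℓdef
  have hℓpos : ∀ n, 0 < ℓ n := fun n => div_pos hℓ₀ (pow_pos two_pos n)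
  set K : ℕ → Set ℝ := fun n => Icc (c n) (c n + ℓ n) with hKdef
  set Φ : ℝ → ℝ → ℝ≥0∞ := fun x y => ENNReal.ofReal (|g x - g y| ^ p) with hΦdef
  have hΦm : Measurable (Function.uncurry Φ) := by
    have hc : Continuous fun q : ℝ × ℝ => |g q.1 - g q.2| ^ p := by
      apply Continuous.rpow_const
      · exact ((hg.comp continuous_fst).sub (hg.comp continuous_snd)).abs
      · exact fun q => Or.inr hp.le
    exact (ENNReal.continuous_ofReal.comp hc).measurable
  set h : ℕ → ℝ → ℝ≥0∞ := fun n x => ∫⁻ y in K (n+1), Φ x y with hhdef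
  have hhm : ∀ n, Measurable (h n) := fun n => Measurable.lintegral_prod_right hΦm
  set B : ℕ → ℝ≥0∞ := fun n => ENNReal.ofReal ((ℓ n) ^ (θ*p+1)) * M with hBdef
  have hB0 : ∀ n, B n ≠ 0 := by
    intro n
    apply mul_ne_zero _ hM0
    simp only [ne_eq, ENNReal.ofReal_eq_zero, not_le]
    exact rpow_pos_of_pos (hℓpos n) _
  have hBt : ∀ n, B n ≠ ⊤ := fun n => ENNReal.mul_ne_top ENNReal.ofReal_ne_top hMt
  have hvol : ∀ n, volume (K n) = ENNReal.ofReal (ℓ n) := by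
    intro n; simp [hKdef, Real.volume_Icc]
  have hv0 : ∀ n, volume (K n) ≠ 0 := by
    intro n; rw [hvol n]; simp [ENNReal.ofReal_eq_zero, not_le, hℓpos n]
  have hvt : ∀ n, volume (K n) ≠ ⊤ := fun n => by rw [hvol n]; exact ENNReal.ofReal_ne_top
  have hinth : ∀ n, (∫⁻ x in K n, h n x) ≤ B n := by
    intro n
    refine le_trans ?_ (hbound n)
    refine lintegral_mono fun x => ?_
    exact lintegral_mono_set (hsub n)
  have step : ∀ n (x : ℝ), x ∈ K n → h n x * volume (K n) ≤ 3 * B n →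
      ∃ y, y ∈ K (n+1) ∧ (h (n+1) y * volume (K (n+1)) ≤ 3 * B (n+1)) ∧
        Φ x y * (volume (K n) * volume (K (n+1))) ≤ 9 * B n := by
    intro n x hx hgood
    have hΦxm : Measurable (Φ x) := hΦm.comp (measurable_prodMk_left)
    have hB2 : (∫⁻ y in K (n+1), Φ x y) ≤ 3 * B n / volume (K n) := by
      rw [ENNReal.le_div_iff_mul_le (.inl (hv0 n)) (.inl (hvt n))]
      exact hgood
    obtain ⟨y, hy, hy1, hy2⟩ := grr_exists_good (K (n+1)) (hv0 (n+1)) (hvt (n+1))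
      (h (n+1)) (Φ x) (hhm (n+1)) hΦxm (B (n+1)) (3 * B n / volume (K n))
      (hinth (n+1)) hB2 (hB0 (n+1)) (hBt (n+1))
      (by
        simp only [ne_eq, ENNReal.div_eq_zero_iff, not_or]
        exact ⟨mul_ne_zero (by norm_num) (hB0 n), hvt n⟩)
      ((ENNReal.div_lt_top (ENNReal.mul_ne_top (by norm_num) (hBt n)) (hv0 n)).ne)
    refine ⟨y, hy, hy1, ?_⟩
    have : Φ x y * volume (K (n+1)) ≤ 9 * B n / volume (K n) := by
      refine hy2.trans (le_of_eq ?_)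
      rw [← mul_div_assoc, ← mul_assoc]
      norm_num
    calc Φ x y * (volume (K n) * volume (K (n+1)))
        = Φ x y * volume (K (n+1)) * volume (K n) := by ring
      _ ≤ 9 * B n / volume (K n) * volume (K n) := by gcongr
      _ ≤ 9 * B n := by rw [mul_comm]; exact ENNReal.mul_div_le
  choose next hmem hgood2 hΦle using step
  obtain ⟨u, hu0, humem, hustep⟩ : ∃ u : ℕ → ℝ, u 0 = x₀ ∧ (∀ n, u n ∈ K n) ∧
      (∀ n, Φ (u n) (u (n+1)) * (volume (K n) * volume (K (n+1))) ≤ 9 * B n) := by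
    have hx₀good' : h 0 x₀ * volume (K 0) ≤ 3 * B 0 := hx₀good
    let F : (n : ℕ) → {x : ℝ // x ∈ K n ∧ h n x * volume (K n) ≤ 3 * B n} :=
      fun n => Nat.rec ⟨x₀, hx₀, hx₀good'⟩
        (fun m ih => ⟨next m ih.1 ih.2.1 ih.2.2,
          hmem m ih.1 ih.2.1 ih.2.2, hgood2 m ih.1 ih.2.1 ih.2.2⟩) n
    exact ⟨fun n => (F n).1, rfl, fun n => (F n).2.1,
      fun n => hΦle n (F n).1 (F n).2.1 (F n).2.2⟩
  -- pointwise increments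
  set r : ℝ := (1/2:ℝ)^κ with hrdef
  have hr0 : 0 ≤ r := Real.rpow_nonneg (by norm_num) _
  have hr1 : r < 1 := Real.rpow_lt_one (by norm_num) (by norm_num) hκ
  set A : ℝ := (18 * M.toReal)^(1/p) * ℓ₀^κ with hAdef
  have hA0 : 0 ≤ A := by
    apply mul_nonneg (Real.rpow_nonneg ?_ _) (Real.rpow_nonneg hℓ₀.le _)
    positivity
  have hd : ∀ n, |g (u n) - g (u (n+1))| ≤ A * r^n := by
    intro n
    have h9 := hustep n
    have hℓn := hℓpos n
    have hℓn1 := hℓpos (n+1)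
    have hℓhalf : ℓ (n+1) = ℓ n / 2 := by
      simp only [hℓdef, pow_succ, div_div]
    rw [hvol n, hvol (n+1), ← ENNReal.ofReal_mul (hℓpos n).le] at h9
    have hMr : M = ENNReal.ofReal M.toReal := (ENNReal.ofReal_toReal hMt).symm
    have h9' : Φ (u n) (u (n+1)) ≤
        ENNReal.ofReal (9 * ((ℓ n)^(θ*p+1) * M.toReal) / (ℓ n * ℓ (n+1))) := by
      rw [ENNReal.ofReal_div_of_pos (by positivity), ENNReal.le_div_iff_mul_le
        (.inl (by simp [ENNReal.ofReal_eq_zero, not_le]; positivity)) (.inl ENNReal.ofReal_ne_top)]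
      refine h9.trans (le_of_eq ?_)
      rw [ENNReal.ofReal_mul (by norm_num : (0:ℝ) ≤ 9), ENNReal.ofReal_mul (by positivity),
        ENNReal.ofReal_toReal hMt, ENNReal.ofReal_ofNat]
    have hratio : 9 * ((ℓ n)^(θ*p+1) * M.toReal) / (ℓ n * ℓ (n+1))
        = 18 * M.toReal * (ℓ n)^(θ*p-1) := by
      have hsplit : (ℓ n)^(θ*p+1) = (ℓ n)^(θ*p-1) * (ℓ n)^(2:ℝ) := by
        rw [← Real.rpow_add hℓn]; congr 1; ring
      rw [hsplit, hℓhalf]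
      rw [show ((2:ℝ) : ℝ) = ((2:ℕ) : ℝ) by norm_num, Real.rpow_natCast]
      field_simp
      ring
    have hpow : |g (u n) - g (u (n+1))| ^ p ≤ 18 * M.toReal * (ℓ n)^(θ*p-1) := by
      rw [← hratio]
      refine (ENNReal.ofReal_le_ofReal_iff (by positivity)).mp ?_
      exact h9'
    have habs : |g (u n) - g (u (n+1))| = (|g (u n) - g (u (n+1))| ^ p) ^ (1/p) := by
      rw [one_div, Real.rpow_rpow_inv (abs_nonneg _) hp.ne']
    rw [habs]
    calc (|g (u n) - g (u (n+1))| ^ p) ^ (1/p)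
        ≤ (18 * M.toReal * (ℓ n)^(θ*p-1)) ^ (1/p) := by
          apply Real.rpow_le_rpow (by positivity) hpow hp'.le
      _ = (18 * M.toReal)^(1/p) * ((ℓ n)^(θ*p-1)) ^ (1/p) := by
          apply Real.mul_rpow (by positivity) (by positivity)
      _ = (18 * M.toReal)^(1/p) * (ℓ n) ^ κ := by
          rw [← Real.rpow_mul (hℓpos n).le]
          congr 1
          rw [hκdef]
          field_simp
      _ = A * r^n := by
          rw [hAdef, hrdef, mul_assoc]
          congr 1
          have : ℓ n = ℓ₀ * (1/2:ℝ)^n := by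
            simp [hℓdef]; ring
          rw [this, Real.mul_rpow hℓ₀.le (by positivity)]
          congr 1
          rw [← Real.rpow_natCast ((1/2:ℝ)) n, ← Real.rpow_natCast ((1/2:ℝ)^κ) n,
            ← Real.rpow_mul (by norm_num), ← Real.rpow_mul (by norm_num), mul_comm]
  have tele : ∀ N, |g (u 0) - g (u N)| ≤ A * (1-r)⁻¹ := by
    have tsum_bd : ∀ N, ∑ n ∈ Finset.range N, A * r^n ≤ A * (1-r)⁻¹ := by
      intro N
      rw [← Finset.mul_sum]
      apply mul_le_mul_of_nonneg_left _ hA0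
      calc ∑ n ∈ Finset.range N, r^n ≤ ∑' n : ℕ, r^n :=
            Summable.sum_le_tsum _ (fun i _ => pow_nonneg hr0 i) (summable_geometric_of_lt_one hr0 hr1)
        _ = (1-r)⁻¹ := tsum_geometric_of_lt_one hr0 hr1
    have tele2 : ∀ N, |g (u 0) - g (u N)| ≤ ∑ n ∈ Finset.range N, A * r^n := by
      intro N
      induction N with
      | zero => simp
      | succ N ih =>
        calc |g (u 0) - g (u (N+1))| ≤ |g (u 0) - g (u N)| + |g (u N) - g (u (N+1))| :=
              abs_sub_le _ _ _
          _ ≤ (∑ n ∈ Finset.range N, A * r^n) + A * r^N := add_le_add ih (hd N)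
          _ = ∑ n ∈ Finset.range (N+1), A * r^n := (Finset.sum_range_succ _ N).symm
    exact fun N => (tele2 N).trans (tsum_bd N)
  have hulim : Tendsto u atTop (𝓝 τ) := by
    rw [tendsto_iff_dist_tendsto_zero]
    have hb : ∀ N, dist (u N) τ ≤ ℓ N := by
      intro N
      have h1 := humem N
      have h2 := hτ N
      rw [hKdef] at h1
      simp only [mem_Icc] at h1 h2
      rw [Real.dist_eq, abs_le]
      constructor <;> [skip; skip] <;> [linarith [h1.1, h1.2, h2.1, h2.2]; linarith [h1.1, h1.2, h2.1, h2.2]]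
    have hℓ0 : Tendsto ℓ atTop (𝓝 0) := by
      have hfe : ℓ = fun n => ℓ₀ * (1/2:ℝ)^n := funext fun n => by
        simp [hℓdef]; ring
      rw [hfe]
      simpa using (tendsto_pow_atTop_nhds_zero_of_lt_one (by norm_num : (0:ℝ) ≤ 1/2)
        (by norm_num)).const_mul ℓ₀
    exact squeeze_zero (fun N => dist_nonneg) hb hℓ0
  have hglim : Tendsto (fun N => |g x₀ - g (u N)|) atTop (𝓝 (|g x₀ - g τ|)) :=
    (tendsto_const_nhds.sub ((hg.tendsto τ).comp hulim)).abs
  have final := le_of_tendsto hglim (Filter.Eventually.of_forall (fun N => by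
    rw [← hu0]; exact tele N))
  rw [div_eq_mul_inv]
  exact final

lemma grr_core (p θ : ℝ) (hp : 0 < p) (hθ : 1/p < θ)
    (g : ℝ → ℝ) (hg : Continuous g) (T s t : ℝ) (hs : 0 ≤ s) (hst : s < t) (ht : t ≤ T)
    (J : ℝ≥0∞)
    (hJ : J = ∫⁻ x in Icc (0:ℝ) T, ∫⁻ y in Icc (0:ℝ) T,
        ENNReal.ofReal (|g x - g y| ^ p / |x - y| ^ (θ * p + 1)))
    (hJt : J ≠ ⊤) :
    |g t - g s| ≤ (2 * (18:ℝ)^(1/p) / (1 - (1/2:ℝ)^(θ-1/p))) * J.toReal^(1/p) * (t-s)^(θ-1/p) := by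
  have hp' : (0:ℝ) < 1/p := by positivity
  set κ := θ - 1/p with hκdef
  have hκ : 0 < κ := sub_pos.mpr hθ
  have hθp : (1:ℝ) < θ * p := by
    rw [div_lt_iff₀ hp] at hθ; linarith
  have key : ∀ δ : ℝ, 0 < δ →
      |g t - g s| ≤ (2 * (18:ℝ)^(1/p) / (1 - (1/2:ℝ)^κ)) * (J.toReal + δ)^(1/p) * (t-s)^κ := by
    intro δ hδ
    set M := J + ENNReal.ofReal δ with hMdef
    have hM0 : M ≠ 0 := by
      simp only [hMdef, ne_eq, add_eq_zero, ENNReal.ofReal_eq_zero, not_and, not_le]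
      intro _; exact hδ
    have hMt : M ≠ ⊤ := ENNReal.add_ne_top.mpr ⟨hJt, ENNReal.ofReal_ne_top⟩
    set ℓ₀ := t - s with hℓ₀def
    have hℓ₀ : 0 < ℓ₀ := sub_pos.mpr hst
    have hIcc : Icc s t ⊆ Icc (0:ℝ) T := Icc_subset_Icc hs ht
    set Φ : ℝ → ℝ → ℝ≥0∞ := fun x y => ENNReal.ofReal (|g x - g y| ^ p) with hΦdef
    set R : ℝ → ℝ → ℝ≥0∞ :=
      fun x y => ENNReal.ofReal (|g x - g y| ^ p / |x - y| ^ (θ * p + 1)) with hRdef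
    have hΦm : Measurable (Function.uncurry Φ) := by
      have hc : Continuous fun q : ℝ × ℝ => |g q.1 - g q.2| ^ p := by
        apply Continuous.rpow_const
        · exact ((hg.comp continuous_fst).sub (hg.comp continuous_snd)).abs
        · exact fun q => Or.inr hp.le
      exact (ENNReal.continuous_ofReal.comp hc).measurable
    have hRm : Measurable (Function.uncurry R) := by
      apply ENNReal.measurable_ofReal.comp
      apply Measurable.div
      · exact (((hg.comp continuous_fst).sub (hg.comp continuous_snd)).abs.rpow_const
          (fun q => Or.inr hp.le)).measurable
      · exact ((continuous_fst.sub continuous_snd).abs.rpow_const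
          (fun q => Or.inr (by linarith))).measurable
    have bound : ∀ a L : ℝ, 0 < L → Icc a (a+L) ⊆ Icc s t →
        (∫⁻ x in Icc a (a+L), ∫⁻ y in Icc a (a+L), Φ x y)
          ≤ ENNReal.ofReal (L ^ (θ*p+1)) * M := by
      intro a L hL hsub2
      have ptwise : ∀ x ∈ Icc a (a+L), ∀ y ∈ Icc a (a+L),
          Φ x y ≤ ENNReal.ofReal (L ^ (θ*p+1)) * R x y := by
        intro x hx y hy
        rw [hΦdef, hRdef]
        simp only []
        rw [← ENNReal.ofReal_mul (by positivity)]
        apply ENNReal.ofReal_le_ofReal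
        rcases eq_or_ne x y with rfl | hxy
        · simp only [sub_self, abs_zero]
          rw [Real.zero_rpow hp.ne']
          positivity
        · have hd0 : 0 < |x - y| := abs_pos.mpr (sub_ne_zero.mpr hxy)
          have hdL : |x - y| ≤ L := by
            rw [abs_le]
            rw [mem_Icc] at hx hy
            constructor <;> [linarith [hx.1, hx.2, hy.1, hy.2]; linarith [hx.1, hx.2, hy.1, hy.2]]
          have hne : |x - y| ^ (θ*p+1) ≠ 0 := by positivity
          calc |g x - g y| ^ p
              = |x - y| ^ (θ*p+1) * (|g x - g y| ^ p / |x - y| ^ (θ*p+1)) := by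
                field_simp
            _ ≤ L ^ (θ*p+1) * (|g x - g y| ^ p / |x - y| ^ (θ*p+1)) := by
                apply mul_le_mul_of_nonneg_right
                · exact Real.rpow_le_rpow hd0.le hdL (by linarith)
                · positivity
      calc (∫⁻ x in Icc a (a+L), ∫⁻ y in Icc a (a+L), Φ x y)
          ≤ ∫⁻ x in Icc a (a+L), ∫⁻ y in Icc a (a+L), ENNReal.ofReal (L ^ (θ*p+1)) * R x y := by
            refine setLIntegral_mono' measurableSet_Icc fun x hx => ?_
            exact setLIntegral_mono' measurableSet_Icc fun y hy => ptwise x hx y hy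
        _ = ∫⁻ x in Icc a (a+L), ENNReal.ofReal (L ^ (θ*p+1)) * ∫⁻ y in Icc a (a+L), R x y := by
            apply lintegral_congr fun x => lintegral_const_mul' _ _ ENNReal.ofReal_ne_top
        _ = ENNReal.ofReal (L ^ (θ*p+1)) * ∫⁻ x in Icc a (a+L), ∫⁻ y in Icc a (a+L), R x y :=
            lintegral_const_mul' _ _ ENNReal.ofReal_ne_top
        _ ≤ ENNReal.ofReal (L ^ (θ*p+1)) * ∫⁻ x in Icc 0 T, ∫⁻ y in Icc 0 T, R x y := by
            refine mul_le_mul_of_nonneg_left ?_ (by positivity)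
            calc (∫⁻ x in Icc a (a+L), ∫⁻ y in Icc a (a+L), R x y)
                ≤ ∫⁻ x in Icc a (a+L), ∫⁻ y in Icc 0 T, R x y :=
                  lintegral_mono fun x => lintegral_mono_set (hsub2.trans hIcc)
              _ ≤ ∫⁻ x in Icc 0 T, ∫⁻ y in Icc 0 T, R x y :=
                  lintegral_mono_set (hsub2.trans hIcc)
        _ ≤ ENNReal.ofReal (L ^ (θ*p+1)) * M := by
            rw [← hJ, hMdef]
            gcongr
            exact le_self_add
    have hℓpos' : ∀ n : ℕ, 0 < ℓ₀/2^n := fun n => div_pos hℓ₀ (by positivity)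
    have hℓmon : ∀ n : ℕ, ℓ₀/2^(n+1) ≤ ℓ₀/2^n := by
      intro n
      apply div_le_div_of_nonneg_left hℓ₀.le (by positivity)
      rw [pow_succ]
      nlinarith [pow_pos (two_pos (α := ℝ)) n]
    have hdiv_le : ∀ n : ℕ, ℓ₀/2^n ≤ ℓ₀ := by
      intro n
      apply div_le_self hℓ₀.le
      exact one_le_pow₀ one_le_two
    have hsub_s : ∀ n : ℕ, Icc s (s + ℓ₀/2^(n+1)) ⊆ Icc s (s + ℓ₀/2^n) :=
      fun n => Icc_subset_Icc le_rfl (by linarith [hℓmon n])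
    have hτs : ∀ n : ℕ, s ∈ Icc s (s + ℓ₀/2^n) := fun n => ⟨le_rfl, by linarith [hℓpos' n]⟩
    have hKs : ∀ n : ℕ, Icc s (s + ℓ₀/2^n) ⊆ Icc s t :=
      fun n => Icc_subset_Icc le_rfl (by have := hdiv_le n; rw [hℓ₀def] at this ⊢; linarith)
    have hbound_s : ∀ n : ℕ, (∫⁻ x in Icc s (s + ℓ₀/2^n), ∫⁻ y in Icc s (s + ℓ₀/2^n), Φ x y)
        ≤ ENNReal.ofReal ((ℓ₀/2^n) ^ (θ*p+1)) * M := fun n => bound s (ℓ₀/2^n) (hℓpos' n) (hKs n)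
    have hsub_t : ∀ n : ℕ, Icc (t - ℓ₀/2^(n+1)) (t - ℓ₀/2^(n+1) + ℓ₀/2^(n+1))
        ⊆ Icc (t - ℓ₀/2^n) (t - ℓ₀/2^n + ℓ₀/2^n) :=
      fun n => Icc_subset_Icc (by linarith [hℓmon n]) (by linarith [hℓmon n])
    have hτt : ∀ n : ℕ, t ∈ Icc (t - ℓ₀/2^n) (t - ℓ₀/2^n + ℓ₀/2^n) :=
      fun n => ⟨by linarith [hℓpos' n], by linarith⟩
    have hKt : ∀ n : ℕ, Icc (t - ℓ₀/2^n) (t - ℓ₀/2^n + ℓ₀/2^n) ⊆ Icc s t :=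
      fun n => Icc_subset_Icc
        (by have := hdiv_le n; rw [hℓ₀def] at this; linarith) (by linarith [hdiv_le n])
    have hbound_t : ∀ n : ℕ, (∫⁻ x in Icc (t - ℓ₀/2^n) (t - ℓ₀/2^n + ℓ₀/2^n),
          ∫⁻ y in Icc (t - ℓ₀/2^n) (t - ℓ₀/2^n + ℓ₀/2^n), Φ x y)
        ≤ ENNReal.ofReal ((ℓ₀/2^n) ^ (θ*p+1)) * M :=
      fun n => bound (t - ℓ₀/2^n) (ℓ₀/2^n) (hℓpos' n) (hKt n)
    have hst0 : Icc s t = Icc s (s + ℓ₀/2^0) := by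
      have : s + ℓ₀/2^0 = t := by rw [pow_zero, div_one, hℓ₀def]; ring
      rw [this]
    have htt0 : Icc s t = Icc (t - ℓ₀/2^0) (t - ℓ₀/2^0 + ℓ₀/2^0) := by
      have h1 : t - ℓ₀/2^0 = s := by rw [pow_zero, div_one, hℓ₀def]; ring
      have h2 : t - ℓ₀/2^0 + ℓ₀/2^0 = t := by ring
      rw [h2, h1]
    set B0 : ℝ≥0∞ := ENNReal.ofReal ((ℓ₀/2^0) ^ (θ*p+1)) * M with hB0def
    have hB00 : B0 ≠ 0 := by
      apply mul_ne_zero _ hM0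
      simp only [ne_eq, ENNReal.ofReal_eq_zero, not_le]
      exact rpow_pos_of_pos (hℓpos' 0) _
    have hB0t : B0 ≠ ⊤ := ENNReal.mul_ne_top ENNReal.ofReal_ne_top hMt
    have hvol0 : volume (Icc s t) ≠ 0 := by
      rw [Real.volume_Icc]
      simp only [ne_eq, ENNReal.ofReal_eq_zero, not_le]
      linarith
    have hvolt : volume (Icc s t) ≠ ⊤ := by rw [Real.volume_Icc]; exact ENNReal.ofReal_ne_top
    have hint1 : (∫⁻ x in Icc s t, ∫⁻ y in Icc s (s + ℓ₀/2^1), Φ x y) ≤ B0 := by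
      calc (∫⁻ x in Icc s t, ∫⁻ y in Icc s (s + ℓ₀/2^1), Φ x y)
          ≤ ∫⁻ x in Icc s t, ∫⁻ y in Icc s t, Φ x y :=
            lintegral_mono fun x => lintegral_mono_set (hKs 1)
        _ ≤ B0 := by rw [hst0]; exact hbound_s 0
    have hint2 : (∫⁻ x in Icc s t, ∫⁻ y in Icc (t - ℓ₀/2^1) (t - ℓ₀/2^1 + ℓ₀/2^1), Φ x y) ≤ B0 := by
      calc (∫⁻ x in Icc s t, ∫⁻ y in Icc (t - ℓ₀/2^1) (t - ℓ₀/2^1 + ℓ₀/2^1), Φ x y)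
          ≤ ∫⁻ x in Icc s t, ∫⁻ y in Icc s t, Φ x y :=
            lintegral_mono fun x => lintegral_mono_set (hKt 1)
        _ ≤ B0 := by rw [htt0]; exact hbound_t 0
    obtain ⟨x₀, hx₀mem, hg1, hg2⟩ := grr_exists_good (Icc s t) hvol0 hvolt
      (fun x => ∫⁻ y in Icc s (s + ℓ₀/2^1), Φ x y)
      (fun x => ∫⁻ y in Icc (t - ℓ₀/2^1) (t - ℓ₀/2^1 + ℓ₀/2^1), Φ x y)
      (Measurable.lintegral_prod_right hΦm) (Measurable.lintegral_prod_right hΦm)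
      B0 B0 hint1 hint2 hB00 hB0t hB00 hB0t
    have r1 := grr_chain p θ hp hθ g hg ℓ₀ hℓ₀ (fun _ => s) hsub_s s hτs M hM0 hMt hbound_s x₀
      (hst0 ▸ hx₀mem) (by rw [← hst0]; exact hg1)
    have r2 := grr_chain p θ hp hθ g hg ℓ₀ hℓ₀ (fun n => t - ℓ₀/2^n) hsub_t t hτt M hM0 hMt
      hbound_t x₀ (htt0 ▸ hx₀mem) (by rw [← htt0]; exact hg2)
    have hMr : M.toReal = J.toReal + δ := by
      rw [hMdef, ENNReal.toReal_add hJt ENNReal.ofReal_ne_top, ENNReal.toReal_ofReal hδ.le]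
    have htri : |g t - g s| ≤ |g t - g x₀| + |g x₀ - g s| := abs_sub_le _ _ _
    have hr2' : |g t - g x₀| = |g x₀ - g t| := abs_sub_comm _ _
    have hJδ : (0:ℝ) ≤ J.toReal + δ := by positivity
    have hsplit : (18 * M.toReal)^(1/p) = (18:ℝ)^(1/p) * (J.toReal + δ)^(1/p) := by
      rw [hMr, Real.mul_rpow (by norm_num) hJδ]
    calc |g t - g s| ≤ |g t - g x₀| + |g x₀ - g s| := htri
      _ ≤ ((18 * M.toReal)^(1/p) * ℓ₀^κ / (1 - (1/2:ℝ)^κ))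
          + ((18 * M.toReal)^(1/p) * ℓ₀^κ / (1 - (1/2:ℝ)^κ)) := by
          rw [hr2']
          exact add_le_add r2 r1
      _ = (2 * (18:ℝ)^(1/p) / (1 - (1/2:ℝ)^κ)) * (J.toReal + δ)^(1/p) * ℓ₀^κ := by
          rw [hsplit]; ring
  have hcont : Tendsto
      (fun δ : ℝ => (2 * (18:ℝ)^(1/p) / (1 - (1/2:ℝ)^κ)) * (J.toReal + δ)^(1/p) * (t-s)^κ)
      (nhdsWithin 0 (Ioi 0)) (nhds ((2 * (18:ℝ)^(1/p) / (1 - (1/2:ℝ)^κ)) * J.toReal^(1/p) * (t-s)^κ)) := by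
    have h1 : Tendsto (fun δ : ℝ => J.toReal + δ) (nhdsWithin 0 (Ioi 0)) (nhds J.toReal) := by
      have h0 : Tendsto (fun δ : ℝ => J.toReal + δ) (nhds 0) (nhds (J.toReal + 0)) :=
        (continuous_const.add continuous_id).tendsto 0
      rw [add_zero] at h0
      exact h0.mono_left nhdsWithin_le_nhds
    have h2 : Tendsto (fun x : ℝ => x ^ (1/p)) (nhds J.toReal) (nhds (J.toReal ^ (1/p))) :=
      (Real.continuousAt_rpow_const _ _ (Or.inr hp'.le)).tendsto
    exact ((h2.comp h1).const_mul _).mul_const _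
  exact ge_of_tendsto hcont (eventually_nhdsWithin_of_forall (fun δ hδ => key δ hδ))


/-- Garsia–Rodemich–Rumsey inequality. The right-hand side (a lower Lebesgue integral in
`ℝ≥0∞`) is allowed to be infinite, in which case the inequality holds trivially. -/
theorem garsia_rodemich_rumsey (p θ : ℝ) (hp : 0 < p) (hθ : 1/p < θ) :
    ∃ C : ℝ, 0 < C ∧ ∀ T : ℝ, 0 < T → ∀ f : ℝ → ℝ, ContinuousOn f (Set.Icc 0 T) →
      ∀ s t : ℝ, 0 ≤ s → s < t → t ≤ T →
        ENNReal.ofReal (|f t - f s| / (t - s) ^ (θ - 1/p)) ≤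
          ENNReal.ofReal C *
            (∫⁻ x in Set.Icc (0:ℝ) T, ∫⁻ y in Set.Icc (0:ℝ) T,
              ENNReal.ofReal (|f x - f y| ^ p / |x - y| ^ (θ * p + 1))) ^ (1/p) := by
  have hp' : (0:ℝ) < 1/p := by positivity
  have hκ : 0 < θ - 1/p := sub_pos.mpr hθ
  have hr1 : (1/2:ℝ)^(θ-1/p) < 1 := Real.rpow_lt_one (by norm_num) (by norm_num) hκ
  set C : ℝ := 2 * (18:ℝ)^(1/p) / (1 - (1/2:ℝ)^(θ-1/p)) with hCdef
  have hC : 0 < C := by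
    apply div_pos
    · positivity
    · linarith
  refine ⟨C, hC, ?_⟩
  intro T hT f hf s t hs hst htT
  have hT0 : (0:ℝ) ≤ T := hT.le
  set g : ℝ → ℝ := fun x => f (max 0 (min x T)) with hgdef
  have hmem : ∀ x : ℝ, max 0 (min x T) ∈ Icc (0:ℝ) T := by
    intro x
    exact ⟨le_max_left _ _, max_le hT0 (min_le_right x T)⟩
  have hg : Continuous g := by
    apply hf.comp_continuous
    · exact continuous_const.max (continuous_id.min continuous_const)
    · exact hmem
  have hgeq : ∀ x ∈ Icc (0:ℝ) T, g x = f x := by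
    intro x hx
    simp only [hgdef]
    rw [min_eq_left hx.2, max_eq_right hx.1]
  set J := ∫⁻ x in Icc (0:ℝ) T, ∫⁻ y in Icc (0:ℝ) T,
      ENNReal.ofReal (|f x - f y| ^ p / |x - y| ^ (θ * p + 1)) with hJdef
  have hJg : J = ∫⁻ x in Icc (0:ℝ) T, ∫⁻ y in Icc (0:ℝ) T,
      ENNReal.ofReal (|g x - g y| ^ p / |x - y| ^ (θ * p + 1)) := by
    rw [hJdef]
    apply setLIntegral_congr_fun measurableSet_Icc
    intro x hx
    apply setLIntegral_congr_fun measurableSet_Icc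
    intro y hy
    simp only [hgeq x hx, hgeq y hy]
  rcases eq_or_ne J ⊤ with hJt | hJt
  · rw [hJt, ENNReal.top_rpow_of_pos hp', ENNReal.mul_top (by
      simp only [ne_eq, ENNReal.ofReal_eq_zero, not_le]
      exact hC)]
    exact le_top
  · have core := grr_core p θ hp hθ g hg T s t hs hst htT J hJg hJt
    have hsm : s ∈ Icc (0:ℝ) T := ⟨hs, by linarith⟩
    have htm : t ∈ Icc (0:ℝ) T := ⟨by linarith, htT⟩
    rw [hgeq s hsm, hgeq t htm] at core
    have hpow : (0:ℝ) < (t - s) ^ (θ - 1/p) := rpow_pos_of_pos (by linarith) _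
    have hdiv : |f t - f s| / (t - s) ^ (θ - 1/p) ≤ C * J.toReal^(1/p) := by
      rw [div_le_iff₀ hpow]
      exact core
    calc ENNReal.ofReal (|f t - f s| / (t - s) ^ (θ - 1/p))
        ≤ ENNReal.ofReal (C * J.toReal^(1/p)) := ENNReal.ofReal_le_ofReal hdiv
      _ = ENNReal.ofReal C * ENNReal.ofReal (J.toReal^(1/p)) := ENNReal.ofReal_mul hC.le
      _ = ENNReal.ofReal C * J^(1/p) := by
          rw [ENNReal.toReal_rpow, ENNReal.ofReal_toReal
            (ENNReal.rpow_ne_top_of_nonneg hp'.le hJt)]
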